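/- Let P, N ⊆ ℝ be disjoint Borel sets with |ℝ \ (P ∪ N)| = 0 such that every nonempty open interval meets both P and N in positive measure, and let f(τ) = 2 + ∫₀^τ (𝟙_P − 𝟙_N). Then f is not monotone on any nonempty open subinterval of (0,1). -/

import Mathlib

open MeasureTheory Set Filter Metric Topology ENNReal

lemma aux_not_mono (N : Set ℝ) (hN : MeasurableSet N)
    (hposN : ∀ a b : ℝ, a < b → 0 < volume (Ioo a b ∩ N)) (f : ℝ → ℝ)
    (hB : ∀ x y : ℝ, x ≤ y → f y - f x ≤
      (volume (Ioc x y)).toReal - 2 * (volume (Ioc x y ∩ N)).toReal)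
    (a b : ℝ) (hab : a < b) : ¬ MonotoneOn f (Ioo a b) := by
  intro hmono
  set s : Set ℝ := N ∩ Ioo a b with hs
  have hsm : MeasurableSet s := hN.inter measurableSet_Ioo
  have hspos : 0 < volume s := by
    have := hposN a b hab
    simpa [hs, inter_comm] using this
  have hae := Besicovitch.ae_tendsto_measure_inter_div (volume : Measure ℝ) s
  have hmem : ∀ᵐ x ∂(volume.restrict s), x ∈ s := ae_restrict_mem hsm
  haveI : (ae ((volume : Measure ℝ).restrict s)).NeBot := by
    rw [ae_neBot, Ne, Measure.restrict_eq_zero]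
    exact hspos.ne'
  obtain ⟨t, hts, htd⟩ := (hmem.and hae).exists
  -- eventually the density ratio is > 1/2
  have hev : ∀ᶠ r in 𝓝[>] (0:ℝ),
      (1/2 : ℝ≥0∞) < volume (s ∩ closedBall t r) / volume (closedBall t r) :=
    htd.eventually_const_lt (by norm_num)
  -- pick r small enough
  have hta : a < t := hts.2.1
  have htb : t < b := hts.2.2
  have hsmall : ∀ᶠ r in 𝓝[>] (0:ℝ), r < min (t - a) (b - t) := by
    apply eventually_nhdsWithin_of_eventually_nhds
    exact eventually_lt_nhds (by simp only [lt_min_iff]; constructor <;> linarith)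
  obtain ⟨r, hr⟩ := (hev.and (hsmall.and self_mem_nhdsWithin)).exists
  obtain ⟨hratio, hrsmall, hrpos⟩ := hr
  replace hrpos : (0:ℝ) < r := hrpos
  have hra : a < t - r := by have := lt_min_iff.mp hrsmall; linarith [this.1]
  have hrb : t + r < b := by have := lt_min_iff.mp hrsmall; linarith [this.2]
  -- closed ball is Icc
  have hcb : closedBall t r = Icc (t - r) (t + r) := Real.closedBall_eq_Icc
  have hvcb : volume (closedBall t r) = ENNReal.ofReal (2 * r) := by
    rw [hcb, Real.volume_Icc]; ring_nf
  -- from the density ratio: volume (s ∩ cb) > ofReal r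
  have h1 : ENNReal.ofReal r < volume (s ∩ closedBall t r) := by
    have hne : volume (closedBall t r) ≠ 0 := by
      rw [hvcb]; simp; positivity
    have hnt : volume (closedBall t r) ≠ ⊤ := by rw [hvcb]; exact ENNReal.ofReal_ne_top
    have h' := (ENNReal.lt_div_iff_mul_lt (Or.inl hne) (Or.inl hnt)).mp hratio
    rw [hvcb] at h'
    have heq : (1/2 : ℝ≥0∞) * ENNReal.ofReal (2 * r) = ENNReal.ofReal r := by
      rw [ENNReal.ofReal_mul (by norm_num : (0:ℝ) ≤ 2), ← mul_assoc]
      norm_num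
      rw [ENNReal.inv_mul_cancel (by norm_num) (by norm_num), one_mul]
    rwa [heq] at h'
  have h2 : ENNReal.ofReal r < volume (Ioc (t-r) (t+r) ∩ N) := by
    refine lt_of_lt_of_le h1 ?_
    have hsub : s ∩ closedBall t r ⊆ (Ioc (t-r) (t+r) ∩ N) ∪ {t - r} := by
      rw [hcb]; rintro x ⟨⟨hxN, _⟩, hx⟩
      rcases eq_or_lt_of_le hx.1 with h|h
      · exact Or.inr (by simp [h.symm])
      · exact Or.inl ⟨⟨h, hx.2⟩, hxN⟩
    calc volume (s ∩ closedBall t r)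
        ≤ volume ((Ioc (t-r) (t+r) ∩ N) ∪ {t-r}) := measure_mono hsub
      _ ≤ volume (Ioc (t-r) (t+r) ∩ N) + volume {t-r} := measure_union_le _ _
      _ = volume (Ioc (t-r) (t+r) ∩ N) := by simp
  have hfin : volume (Ioc (t-r) (t+r) ∩ N) ≠ ⊤ :=
    (lt_of_le_of_lt (measure_mono inter_subset_left) measure_Ioc_lt_top).ne
  have htoReal : r < (volume (Ioc (t-r) (t+r) ∩ N)).toReal := by
    have := (ENNReal.toReal_lt_toReal ENNReal.ofReal_ne_top hfin).mpr h2
    rwa [ENNReal.toReal_ofReal hrpos.le] at this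
  have hIoc : (volume (Ioc (t-r) (t+r))).toReal = 2 * r := by
    rw [Real.volume_Ioc, ENNReal.toReal_ofReal (by linarith)]; ring
  have hle := hB (t-r) (t+r) (by linarith)
  have hmo := hmono (show t - r ∈ Ioo a b from ⟨hra, by linarith⟩)
    (show t + r ∈ Ioo a b from ⟨by linarith, hrb⟩) (by linarith)
  rw [hIoc] at hle
  linarith

theorem f_nowhere_monotone
    (P N : Set ℝ) (hP : MeasurableSet P) (hN : MeasurableSet N)
    (hdisj : Disjoint P N)
    (hconull : volume (univ \ (P ∪ N)) = 0)
    (hpos : ∀ a b : ℝ, a < b →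
      0 < volume (Ioo a b ∩ P) ∧ 0 < volume (Ioo a b ∩ N))
    (f : ℝ → ℝ)
    (hf : ∀ τ : ℝ, f τ = 2 + ∫ r in (0:ℝ)..τ,
      (P.indicator (fun _ => (1:ℝ)) r - N.indicator (fun _ => (1:ℝ)) r)) :
    ∀ a b : ℝ, 0 ≤ a → a < b → b ≤ 1 →
      ¬ (MonotoneOn f (Ioo a b) ∨ AntitoneOn f (Ioo a b)) := by
  -- integrability of indicators
  have hint : ∀ (S : Set ℝ), MeasurableSet S → ∀ x y : ℝ,
      IntervalIntegrable (S.indicator fun _ => (1:ℝ)) volume x y := by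
    intro S hS x y
    constructor <;>
      exact (integrableOn_const (C := (1:ℝ)) measure_Ioc_lt_top.ne).indicator hS
  -- value of integral of an indicator
  have hval : ∀ (S : Set ℝ), MeasurableSet S → ∀ x y : ℝ, x ≤ y →
      (∫ r in x..y, S.indicator (fun _ => (1:ℝ)) r) = (volume (Ioc x y ∩ S)).toReal := by
    intro S hS x y hxy
    rw [intervalIntegral.integral_of_le hxy, setIntegral_indicator hS]
    simp [Measure.restrict_apply (measurableSet_Ioc.inter hS)]
    rfl
  -- the increment formula
  have hB : ∀ x y : ℝ, x ≤ y → f y - f x =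
      (volume (Ioc x y ∩ P)).toReal - (volume (Ioc x y ∩ N)).toReal := by
    intro x y hxy
    have h1 : f y - f x = ∫ r in x..y,
        (P.indicator (fun _ => (1:ℝ)) r - N.indicator (fun _ => (1:ℝ)) r) := by
      rw [hf x, hf y]
      have := intervalIntegral.integral_interval_sub_left
        (f := fun r => P.indicator (fun _ => (1:ℝ)) r - N.indicator (fun _ => (1:ℝ)) r)
        (μ := volume) (a := (0:ℝ)) (b := y) (c := x)
        ((hint P hP 0 y).sub (hint N hN 0 y)) ((hint P hP 0 x).sub (hint N hN 0 x))
      rw [← this]; ring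
    rw [h1, intervalIntegral.integral_sub (hint P hP x y) (hint N hN x y),
      hval P hP x y hxy, hval N hN x y hxy]
  -- the sum bound
  have hsum : ∀ x y : ℝ, x ≤ y →
      (volume (Ioc x y ∩ P)).toReal + (volume (Ioc x y ∩ N)).toReal ≤
        (volume (Ioc x y)).toReal := by
    intro x y hxy
    have hd : Disjoint (Ioc x y ∩ P) (Ioc x y ∩ N) :=
      hdisj.mono inter_subset_right inter_subset_right
    have hu : volume (Ioc x y ∩ P) + volume (Ioc x y ∩ N) =
        volume ((Ioc x y ∩ P) ∪ (Ioc x y ∩ N)) :=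
      (measure_union hd (measurableSet_Ioc.inter hN)).symm
    have hle : volume ((Ioc x y ∩ P) ∪ (Ioc x y ∩ N)) ≤ volume (Ioc x y) :=
      measure_mono (union_subset inter_subset_left inter_subset_left)
    have hfP : volume (Ioc x y ∩ P) ≠ ⊤ :=
      (lt_of_le_of_lt (measure_mono inter_subset_left) measure_Ioc_lt_top).ne
    have hfN : volume (Ioc x y ∩ N) ≠ ⊤ :=
      (lt_of_le_of_lt (measure_mono inter_subset_left) measure_Ioc_lt_top).ne
    rw [← ENNReal.toReal_add hfP hfN, hu]
    exact ENNReal.toReal_mono measure_Ioc_lt_top.ne hle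
  intro a b _ hab _ h
  rcases h with h | h
  · exact aux_not_mono N hN (fun a b h => (hpos a b h).2) f
      (fun x y hxy => by
        have := hsum x y hxy; have := hB x y hxy; linarith) a b hab h
  · refine aux_not_mono P hP (fun a b h => (hpos a b h).1) (fun x => -f x)
      (fun x y hxy => by
        have := hsum x y hxy; have := hB x y hxy; linarith) a b hab ?_
    intro u hu v hv huv
    simpa using h hu hv huv
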